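/- Define f(w) = Im(√(D_p(w)))/Im(w) for w ∈ ℂ ∖ (I_p ∪ ℝ); this equals (√(D_p(w)) − √(D_p(conj(w))))/(w − conj(w)). Then f is continuous on ℂ ∖ (I_p ∪ ℝ), and the function obtained by additionally setting f(t) = 𝒜(𝒜t + (1−2a))/√(D_p(t)) for t ∈ ℝ is continuous on ℂ ∖ I_p. Moreover, for w₀ ∈ I_p, the limit of f(w) as w → w₀ from the right equals √(−D_p(w₀))/|Im(w₀)|, and the limit from the left equals −√(−D_p(w₀))/|Im(w₀)|. -/

import Mathlib

open Set Filter

theorem stmt3 (a α α' : ℝ) (ha : a ∈ Ioo (0 : ℝ) 1) (hαα : α ≠ α')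
    (𝒜 : ℝ) (h𝒜 : 𝒜 = α' - α)
    (Dp : ℂ → ℂ)
    (hDp : ∀ w : ℂ, Dp w = ((𝒜 : ℂ) * w + ((1 - 2 * a : ℝ) : ℂ)) ^ 2 + ((4 * a * (1 - a) : ℝ) : ℂ))
    (Ip : Set ℂ)
    (hIp : Ip = {w : ℂ | w.re = -(1 - 2 * a) / 𝒜 ∧ 2 * Real.sqrt (a * (1 - a)) / |𝒜| < |w.im|})
    (F : ℂ → ℝ)
    -- F(w) = Im(√(D_p(w)))/Im(w) off the real axis
    (hF : ∀ w : ℂ, w.im ≠ 0 → F w = ((Dp w) ^ ((1 : ℂ) / 2)).im / w.im)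
    -- the continuous extension to ℝ
    (hFR : ∀ t : ℝ, F (t : ℂ) =
      𝒜 * (𝒜 * t + (1 - 2 * a)) / Real.sqrt ((𝒜 * t + (1 - 2 * a)) ^ 2 + 4 * a * (1 - a))) :
    -- the quotient identity
    (∀ w : ℂ, w.im ≠ 0 → w ∉ Ip →
      ((F w : ℝ) : ℂ) =
        ((Dp w) ^ ((1 : ℂ) / 2) - (Dp ((starRingEnd ℂ) w)) ^ ((1 : ℂ) / 2)) /
          (w - (starRingEnd ℂ) w))
    -- continuity off I_p ∪ ℝ
    ∧ ContinuousOn F (Ip ∪ {w : ℂ | w.im = 0})ᶜ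
    -- the extension is continuous off I_p
    ∧ ContinuousOn F Ipᶜ
    -- one-sided limits at I_p
    ∧ (∀ w₀ ∈ Ip,
        Tendsto F (nhdsWithin w₀ ({w : ℂ | w₀.re < w.re} ∩ (Ip ∪ {w : ℂ | w.im = 0})ᶜ))
          (nhds (Real.sqrt (-(Dp w₀).re) / |w₀.im|))
        ∧ Tendsto F (nhdsWithin w₀ ({w : ℂ | w.re < w₀.re} ∩ (Ip ∪ {w : ℂ | w.im = 0})ᶜ))
          (nhds (-(Real.sqrt (-(Dp w₀).re) / |w₀.im|)))) := by
  obtain ⟨ha0, ha1⟩ := ha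
  have h𝒜0 : 𝒜 ≠ 0 := by rw [h𝒜]; exact sub_ne_zero.mpr (Ne.symm hαα)
  have h𝒜abs : 0 < |𝒜| := abs_pos.mpr h𝒜0
  set c : ℝ := 1 - 2 * a with hc
  set r : ℝ := 4 * a * (1 - a) with hr
  have hr0 : 0 < r := by
    have h1 : 0 < 1 - a := by linarith
    rw [hr]; positivity
  have hre : ∀ w : ℂ, (Dp w).re = (𝒜 * w.re + c) ^ 2 - (𝒜 * w.im) ^ 2 + r := by
    intro w
    rw [hDp w]
    simp [pow_two, Complex.add_re, Complex.mul_re, Complex.mul_im, Complex.add_im]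
    try ring
  have him : ∀ w : ℂ, (Dp w).im = 2 * (𝒜 * w.re + c) * (𝒜 * w.im) := by
    intro w
    rw [hDp w]
    simp [pow_two, Complex.add_re, Complex.mul_re, Complex.mul_im, Complex.add_im]
    try ring
  have hDpC : Continuous Dp := by
    have : Dp = fun w => ((𝒜 : ℂ) * w + (c : ℂ)) ^ 2 + (r : ℂ) := funext hDp
    rw [this]; continuity
  have hIp_mem : ∀ w : ℂ, w ∈ Ip ↔ (𝒜 * w.re + c = 0 ∧ r < (𝒜 * w.im) ^ 2) := by
    intro w
    rw [hIp]
    simp only [mem_setOf_eq]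
    have hs : Real.sqrt (a * (1 - a)) ^ 2 = a * (1 - a) := Real.sq_sqrt (by nlinarith)
    have hsnn : 0 ≤ Real.sqrt (a * (1 - a)) := Real.sqrt_nonneg _
    constructor
    · rintro ⟨h1, h2⟩
      constructor
      · rw [h1]; field_simp; ring
      · rw [div_lt_iff₀ h𝒜abs] at h2
        have h4 : (|w.im| * |𝒜|) ^ 2 = (𝒜 * w.im) ^ 2 := by
          rw [mul_pow, sq_abs, sq_abs]; ring
        nlinarith [mul_self_lt_mul_self (by positivity : (0:ℝ) ≤ 2 * Real.sqrt (a * (1 - a))) h2]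
    · rintro ⟨h1, h2⟩
      constructor
      · field_simp at h1 ⊢; linarith
      · rw [div_lt_iff₀ h𝒜abs]
        have h4 : (|w.im| * |𝒜|) ^ 2 = (𝒜 * w.im) ^ 2 := by
          rw [mul_pow, sq_abs, sq_abs]; ring
        by_contra hcon
        push_neg at hcon
        nlinarith [mul_self_le_mul_self (by positivity : (0:ℝ) ≤ |w.im| * |𝒜|) hcon]
  have harg : ∀ w : ℂ, w ∉ Ip → (Dp w).arg ≠ Real.pi := by
    intro w hw hpi
    rw [Complex.arg_eq_pi_iff] at hpi
    obtain ⟨hneg, him0⟩ := hpi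
    rw [him w] at him0
    rw [hre w] at hneg
    rcases mul_eq_zero.mp him0 with h1 | h2
    · have h1' : 𝒜 * w.re + c = 0 := by
        rcases mul_eq_zero.mp h1 with h | h
        · norm_num at h
        · exact h
      apply hw
      rw [hIp_mem w]
      refine ⟨h1', ?_⟩
      nlinarith
    · have hwim : w.im = 0 := by
        rcases mul_eq_zero.mp h2 with h | h
        · exact absurd h h𝒜0
        · exact h
      rw [hwim] at hneg
      nlinarith [sq_nonneg (𝒜 * w.re + c)]
  -- square root facts
  have hsqmul : ∀ z : ℂ, z ≠ 0 → z ^ ((1:ℂ)/2) * z ^ ((1:ℂ)/2) = z := by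
    intro z hz
    rw [← Complex.cpow_add _ _ hz]
    norm_num
  -- Part 1
  have part1 : ∀ w : ℂ, w.im ≠ 0 → w ∉ Ip →
      ((F w : ℝ) : ℂ) =
        ((Dp w) ^ ((1 : ℂ) / 2) - (Dp ((starRingEnd ℂ) w)) ^ ((1 : ℂ) / 2)) /
          (w - (starRingEnd ℂ) w) := by
    intro w him0 hw
    have harg' := harg w hw
    have hDconj : Dp ((starRingEnd ℂ) w) = (starRingEnd ℂ) (Dp w) := by
      rw [hDp, hDp]
      simp [Complex.conj_ofReal]
    have hgconj : (Dp ((starRingEnd ℂ) w)) ^ ((1:ℂ)/2) = (starRingEnd ℂ) ((Dp w) ^ ((1:ℂ)/2)) := by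
      rw [hDconj, Complex.conj_cpow _ _ harg']
      congr 1
      simp [map_ofNat]
    rw [hgconj, hF w him0, Complex.sub_conj, Complex.sub_conj]
    have hI : (Complex.I : ℂ) ≠ 0 := Complex.I_ne_zero
    have hwim : ((w.im : ℝ) : ℂ) ≠ 0 := Complex.ofReal_ne_zero.mpr him0
    push_cast
    field_simp
  -- Part 3
  have part3 : ContinuousOn F Ipᶜ := by
    intro w₀ hw₀
    apply ContinuousAt.continuousWithinAt
    by_cases him0 : w₀.im = 0
    · -- real point
      have hpos : 0 < (Dp w₀).re := by
        rw [hre w₀, him0]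
        nlinarith [sq_nonneg (𝒜 * w₀.re + c)]
      have hcontre : ContinuousAt (fun w => (Dp w).re) w₀ :=
        (Complex.continuous_re.comp hDpC).continuousAt
      have hev : ∀ᶠ w in nhds w₀, 0 < (Dp w).re := hcontre.eventually (eventually_gt_nhds hpos)
      set G : ℂ → ℝ :=
        fun w => 𝒜 * (𝒜 * w.re + c) / Real.sqrt ((‖Dp w‖ + (Dp w).re) / 2) with hG
      have hGF : ∀ᶠ w in nhds w₀, F w = G w := by
        filter_upwards [hev] with w hw
        have hz0 : Dp w ≠ 0 := by
          intro h; rw [h] at hw; simp at hw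
        have hp : Real.sqrt ((‖Dp w‖ + (Dp w).re) / 2) = ((Dp w) ^ ((1:ℂ)/2)).re := by
          rw [one_div, Complex.cpow_inv_two_re]
        have hppos : 0 < ((Dp w) ^ ((1:ℂ)/2)).re := by
          rw [← hp]
          apply Real.sqrt_pos.mpr
          have := norm_nonneg (Dp w)
          linarith
        by_cases hwim : w.im = 0
        · have hwre : ((w.re : ℝ) : ℂ) = w := Complex.ext (by simp) (by simp [hwim])
          have ht := hFR w.re
          rw [hwre] at ht
          rw [ht]
          simp only [hG]
          have hDval : Dp w = (((𝒜 * w.re + c) ^ 2 + r : ℝ) : ℂ) := by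
            rw [hDp w, ← hwre]
            simp only [Complex.ofReal_re]
            push_cast
            ring
          rw [hDval]
          have hnn : (0:ℝ) ≤ (𝒜 * w.re + c) ^ 2 + r := by positivity
          simp only [Complex.norm_real, Real.norm_eq_abs, Complex.ofReal_re, abs_of_nonneg hnn]
          congr 2
          ring
        · rw [hF w hwim]
          simp only [hG]
          rw [hp]
          have hmul := hsqmul (Dp w) hz0
          have him2 : 2 * ((Dp w) ^ ((1:ℂ)/2)).re * ((Dp w) ^ ((1:ℂ)/2)).im = (Dp w).im := by
            have h := congrArg Complex.im hmul
            rw [Complex.mul_im] at h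
            linarith
          rw [him w] at him2
          rw [div_eq_div_iff hwim (ne_of_gt hppos)]
          nlinarith [him2]
      have hcontG : ContinuousAt G w₀ := by
        have hden : (0:ℝ) < Real.sqrt ((‖Dp w₀‖ + (Dp w₀).re) / 2) := by
          apply Real.sqrt_pos.mpr
          have := norm_nonneg (Dp w₀)
          linarith
        apply ContinuousAt.div
        · exact (continuous_const.mul ((continuous_const.mul Complex.continuous_re).add
            continuous_const)).continuousAt
        · exact (Real.continuous_sqrt.comp
            (((continuous_norm.comp hDpC).add (Complex.continuous_re.comp hDpC)).div_const
              2)).continuousAt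
        · exact ne_of_gt hden
      exact hcontG.congr (Filter.EventuallyEq.symm hGF)
    · -- non-real point
      have harg' := harg w₀ hw₀
      have hcpow : ContinuousAt (fun z : ℂ => z ^ ((1:ℂ)/2)) (Dp w₀) := by
        apply Complex.continuousAt_cpow_const_of_re_pos
        · by_contra h
          push_neg at h
          exact harg' (Complex.arg_eq_pi_iff.mpr ⟨h.1, h.2⟩)
        · norm_num
      have h1 : ContinuousAt (fun w => (Dp w) ^ ((1:ℂ)/2)) w₀ := hcpow.comp hDpC.continuousAt
      have h2 : ContinuousAt (fun w => ((Dp w) ^ ((1:ℂ)/2)).im) w₀ :=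
        Complex.continuous_im.continuousAt.comp h1
      have hcont : ContinuousAt (fun w => ((Dp w) ^ ((1:ℂ)/2)).im / w.im) w₀ :=
        h2.div Complex.continuous_im.continuousAt him0
      apply hcont.congr
      have hevim : ∀ᶠ w in nhds w₀, w.im ≠ 0 :=
        Complex.continuous_im.continuousAt.eventually_ne him0
      filter_upwards [hevim] with w hw
      exact (hF w hw).symm
  -- Part 2
  have part2 : ContinuousOn F (Ip ∪ {w : ℂ | w.im = 0})ᶜ :=
    part3.mono (compl_subset_compl.mpr subset_union_left)
  -- Part 4
  have part4 : ∀ w₀ ∈ Ip,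
      Tendsto F (nhdsWithin w₀ ({w : ℂ | w₀.re < w.re} ∩ (Ip ∪ {w : ℂ | w.im = 0})ᶜ))
        (nhds (Real.sqrt (-(Dp w₀).re) / |w₀.im|))
      ∧ Tendsto F (nhdsWithin w₀ ({w : ℂ | w.re < w₀.re} ∩ (Ip ∪ {w : ℂ | w.im = 0})ᶜ))
        (nhds (-(Real.sqrt (-(Dp w₀).re) / |w₀.im|))) := by
    intro w₀ hw₀
    obtain ⟨hre₀, him₀⟩ := (hIp_mem w₀).mp hw₀
    have him0 : w₀.im ≠ 0 := by
      intro h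
      rw [h] at him₀
      simp at him₀
      nlinarith
    have hDpim0 : (Dp w₀).im = 0 := by rw [him w₀, hre₀]; ring
    have hDpre0 : (Dp w₀).re < 0 := by
      rw [hre w₀, hre₀]
      nlinarith
    have habs : ‖Dp w₀‖ = -(Dp w₀).re := by
      have hz : Dp w₀ = (((Dp w₀).re : ℝ) : ℂ) := Complex.ext (by simp) (by simp [hDpim0])
      nth_rewrite 1 [hz]
      rw [Complex.norm_real, Real.norm_eq_abs, abs_of_neg hDpre0]
    have main : ∀ σ : ℝ, (σ = 1 ∨ σ = -1) → ∀ S : Set ℂ,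
        (∀ w ∈ S, 0 < σ * (w.re - w₀.re) ∧ w.im ≠ 0) →
        Tendsto F (nhdsWithin w₀ S) (nhds (σ * (Real.sqrt (-(Dp w₀).re) / |w₀.im|))) := by
      intro σ hσ S hS
      obtain ⟨s, hs1, hsy⟩ : ∃ s : ℝ, (s = 1 ∨ s = -1) ∧ |w₀.im| = s * w₀.im := by
        rcases him0.lt_or_gt with h | h
        · exact ⟨-1, Or.inr rfl, by rw [abs_of_neg h]; ring⟩
        · exact ⟨1, Or.inl rfl, by rw [abs_of_pos h]; ring⟩
      have hφ : Tendsto (fun w : ℂ =>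
          (σ * s) * Real.sqrt ((‖Dp w‖ - (Dp w).re) / 2) / w.im)
          (nhdsWithin w₀ S)
          (nhds ((σ * s) * Real.sqrt ((‖Dp w₀‖ - (Dp w₀).re) / 2) / w₀.im)) := by
        have hcont : ContinuousAt (fun w : ℂ =>
            (σ * s) * Real.sqrt ((‖Dp w‖ - (Dp w).re) / 2) / w.im) w₀ := by
          apply ContinuousAt.div _ Complex.continuous_im.continuousAt him0
          exact (continuous_const.mul (Real.continuous_sqrt.comp
            (((continuous_norm.comp hDpC).sub
              (Complex.continuous_re.comp hDpC)).div_const 2))).continuousAt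
        exact hcont.continuousWithinAt
      have hval : (σ * s) * Real.sqrt ((‖Dp w₀‖ - (Dp w₀).re) / 2) / w₀.im
          = σ * (Real.sqrt (-(Dp w₀).re) / |w₀.im|) := by
        rw [habs]
        have h2 : (-(Dp w₀).re - (Dp w₀).re) / 2 = -(Dp w₀).re := by ring
        rw [h2, hsy]
        rcases hs1 with h | h <;> rw [h] <;> ring
      rw [← hval]
      apply Tendsto.congr' _ hφ
      have hevsgn : ∀ᶠ w in nhdsWithin w₀ S, 0 < s * w.im := by
        apply Filter.Eventually.filter_mono nhdsWithin_le_nhds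
        have hc : ContinuousAt (fun w : ℂ => s * w.im) w₀ :=
          (continuous_const.mul Complex.continuous_im).continuousAt
        have hval0 : 0 < s * w₀.im := by rw [← hsy]; exact abs_pos.mpr him0
        exact hc.eventually (eventually_gt_nhds hval0)
      filter_upwards [hevsgn, self_mem_nhdsWithin] with w hsgn hwS
      obtain ⟨hσw, hwim⟩ := hS w hwS
      have himD : (Dp w).im = 2 * 𝒜 ^ 2 * (w.re - w₀.re) * w.im := by
        rw [him w]
        have hc' : c = -(𝒜 * w₀.re) := by linarith
        rw [hc']; ring
      have hsgnD : 0 < (σ * s) * (Dp w).im := by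
        rw [himD]
        have h𝒜2 : 0 < 𝒜 ^ 2 := by positivity
        nlinarith [mul_pos (mul_pos h𝒜2 hσw) hsgn]
      rw [hF w hwim]
      have hq : ((Dp w) ^ ((1:ℂ)/2)).im
          = (σ * s) * Real.sqrt ((‖Dp w‖ - (Dp w).re) / 2) := by
        rcases hσ with h1 | h1 <;> rcases hs1 with h2 | h2
        · have hpos' : 0 < (Dp w).im := by rw [h1, h2] at hsgnD; linarith
          rw [one_div, Complex.cpow_inv_two_im_eq_sqrt (le_of_lt hpos'), h1, h2]; ring
        · have hneg' : (Dp w).im < 0 := by rw [h1, h2] at hsgnD; linarith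
          rw [one_div, Complex.cpow_inv_two_im_eq_neg_sqrt hneg', h1, h2]; ring
        · have hneg' : (Dp w).im < 0 := by rw [h1, h2] at hsgnD; linarith
          rw [one_div, Complex.cpow_inv_two_im_eq_neg_sqrt hneg', h1, h2]; ring
        · have hpos' : 0 < (Dp w).im := by rw [h1, h2] at hsgnD; linarith
          rw [one_div, Complex.cpow_inv_two_im_eq_sqrt (le_of_lt hpos'), h1, h2]; ring
      rw [hq]
    constructor
    · have h := main 1 (Or.inl rfl) ({w : ℂ | w₀.re < w.re} ∩ (Ip ∪ {w : ℂ | w.im = 0})ᶜ) ?_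
      · simpa using h
      · rintro w ⟨hw1, hw2⟩
        refine ⟨by simp only [mem_setOf_eq] at hw1; linarith, ?_⟩
        intro h
        exact hw2 (Or.inr h)
    · have h := main (-1) (Or.inr rfl) ({w : ℂ | w.re < w₀.re} ∩ (Ip ∪ {w : ℂ | w.im = 0})ᶜ) ?_
      · simpa [neg_one_mul] using h
      · rintro w ⟨hw1, hw2⟩
        refine ⟨by simp only [mem_setOf_eq] at hw1; linarith, ?_⟩
        intro h
        exact hw2 (Or.inr h)
  exact ⟨part1, part2, part3, part4⟩
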